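/- Let S, Q ⊂ ℝⁿ be finite sets and g : S → Q a bijection with |p − g(p)| ≤ ε for every p ∈ S, where ε ≥ 0. Fix an integer h ≥ 1 with |S| ≥ h+1. Then for every p ∈ S and every h-element subset T of S∖{p}, |A(p,T) − A(g(p), g(T))| ≤ 2ε; consequently, for every i with 1 ≤ i ≤ C(|S|−1, h), the i-th smallest h-order average at p over h-element subsets of S∖{p} and the i-th smallest h-order average at g(p) over h-element subsets of Q∖{g(p)} differ by at most 2ε. -/

import Mathlib

open scoped Classical

/-- The h-order average of a point `p` together with a finite set `T` of
points: the mean `(2/(h(h+1))) Σ_{0≤i<j≤h} dist(p_i,p_j)` of all pairwise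
distances among the `h+1` points `p, T` (for `T` of cardinality `h` not
containing `p`). -/
noncomputable def horderAvg {E : Type*} [PseudoMetricSpace E] (h : ℕ)
    (p : E) (T : Finset E) : ℝ :=
  2 / ((h : ℝ) * ((h : ℝ) + 1)) *
    ((∑ q ∈ T, dist p q) + (∑ q ∈ T, ∑ r ∈ T, dist q r) / 2)

/-- The `i`-th smallest h-order average at a point `p` of a finite set `S`:
the `i`-th entry of the list of the h-order averages `A(p,T)` over all
`h`-element subsets `T` of `S∖{p}`, in increasing order with multiplicity. -/
noncomputable def ithAvg {E : Type*} [PseudoMetricSpace E] (h : ℕ)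
    (S : Finset E) (p : E) (i : ℕ) : ℝ :=
  (Multiset.sort
    ((((S.erase p).powersetCard h).val).map (horderAvg h p)) (· ≤ ·)).getD (i - 1) 0

/-- Perturbing four points moves the distance by at most the sum of the two
perturbations. -/
lemma dist4_aux {E : Type*} [PseudoMetricSpace E] (a b a' b' : E) :
    |dist a b - dist a' b'| ≤ dist a a' + dist b b' := by
  calc |dist a b - dist a' b'|
      ≤ |dist a b - dist a' b| + |dist a' b - dist a' b'| := abs_sub_le _ _ _
    _ ≤ dist a a' + dist b b' := by
        refine add_le_add (abs_dist_sub_le _ _ _) ?_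
        rw [dist_comm a' b, dist_comm a' b']
        exact abs_dist_sub_le _ _ _

/-- If two multisets of reals are related by a matching moving each element by
at most `δ`, then their increasing rearrangements are pointwise within `δ`. -/
lemma sort_close_aux (δ : ℝ) (hδ : 0 ≤ δ) :
    ∀ N (s t : Multiset ℝ), s.card = N →
    Multiset.Rel (fun a b => |a - b| ≤ δ) s t →
    ∀ i, |(Multiset.sort s (· ≤ ·)).getD i 0 - (Multiset.sort t (· ≤ ·)).getD i 0| ≤ δ := by
  intro N
  induction N with
  | zero =>
    intro s t hcard hrel i
    have hs : s = 0 := Multiset.card_eq_zero.mp hcard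
    have ht : t = 0 := Multiset.card_eq_zero.mp
      (by rw [← (Multiset.card_eq_card_of_rel hrel), hcard])
    subst hs; subst ht
    simp [hδ]
  | succ N ih =>
    intro s t hcard hrel i
    have hts : t.card = N + 1 := by rw [← (Multiset.card_eq_card_of_rel hrel), hcard]
    obtain ⟨a, ls', hls⟩ : ∃ a ls', Multiset.sort s (· ≤ ·) = a :: ls' := by
      cases hxs : Multiset.sort s (· ≤ ·) with
      | nil =>
        exfalso
        have := Multiset.length_sort (α := ℝ) (r := (· ≤ ·)) (s := s)
        rw [hxs] at this; simp [hcard] at this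
      | cons a l => exact ⟨a, l, rfl⟩
    obtain ⟨b, lt', hlt⟩ : ∃ b lt', Multiset.sort t (· ≤ ·) = b :: lt' := by
      cases hxt : Multiset.sort t (· ≤ ·) with
      | nil =>
        exfalso
        have := Multiset.length_sort (α := ℝ) (r := (· ≤ ·)) (s := t)
        rw [hxt] at this; simp [hts] at this
      | cons b l => exact ⟨b, l, rfl⟩
    have hscoe : s = a ::ₘ (↑ls' : Multiset ℝ) := by
      rw [← Multiset.sort_eq s (· ≤ ·), hls]; rfl
    have htcoe : t = b ::ₘ (↑lt' : Multiset ℝ) := by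
      rw [← Multiset.sort_eq t (· ≤ ·), hlt]; rfl
    have hsort_s : (a :: ls').Pairwise (· ≤ ·) := hls ▸ Multiset.pairwise_sort s (· ≤ ·)
    have hsort_t : (b :: lt').Pairwise (· ≤ ·) := hlt ▸ Multiset.pairwise_sort t (· ≤ ·)
    have hamin : ∀ x ∈ ls', a ≤ x := fun x hx => (List.pairwise_cons.mp hsort_s).1 x hx
    have hbmin : ∀ x ∈ lt', b ≤ x := fun x hx => (List.pairwise_cons.mp hsort_t).1 x hx
    rw [hscoe, htcoe] at hrel
    obtain ⟨b₀, t₀, hab₀, hrel', ht₀⟩ := Multiset.rel_cons_left.mp hrel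
    have key : |a - b| ≤ δ ∧ Multiset.Rel (fun a b => |a - b| ≤ δ) (↑ls') (↑lt') := by
      rcases Multiset.cons_eq_cons.mp ht₀ with ⟨h1, h2⟩ | ⟨hne, cs, h1, h2⟩
      · exact ⟨h1 ▸ hab₀, h2 ▸ hrel'⟩
      · rw [h2] at hrel'
        obtain ⟨a₀, s₀, ha₀b, hrel'', hs₀⟩ := Multiset.rel_cons_right.mp hrel'
        have hb₀mem : b₀ ∈ (↑lt' : Multiset ℝ) := by rw [h1]; exact Multiset.mem_cons_self _ _
        have ha₀mem : a₀ ∈ (↑ls' : Multiset ℝ) := by rw [hs₀]; exact Multiset.mem_cons_self _ _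
        have hba : b ≤ b₀ := hbmin _ (by exact_mod_cast hb₀mem)
        have haa : a ≤ a₀ := hamin _ (by exact_mod_cast ha₀mem)
        have h1' := abs_le.mp hab₀
        have h2' := abs_le.mp ha₀b
        refine ⟨abs_le.mpr ⟨by linarith, by linarith⟩, ?_⟩
        rw [hs₀, h1]
        exact Multiset.Rel.cons (abs_le.mpr ⟨by linarith, by linarith⟩) hrel''
    have hsort_s' : Multiset.sort (↑ls' : Multiset ℝ) (· ≤ ·) = ls' :=
      List.Perm.eq_of_pairwise'
        (Multiset.pairwise_sort _ _) (List.pairwise_cons.mp hsort_s).2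
        (Multiset.coe_eq_coe.mp (Multiset.sort_eq (↑ls' : Multiset ℝ) (· ≤ ·)))
    have hsort_t' : Multiset.sort (↑lt' : Multiset ℝ) (· ≤ ·) = lt' :=
      List.Perm.eq_of_pairwise'
        (Multiset.pairwise_sort _ _) (List.pairwise_cons.mp hsort_t).2
        (Multiset.coe_eq_coe.mp (Multiset.sort_eq (↑lt' : Multiset ℝ) (· ≤ ·)))
    rw [hls, hlt]
    cases i with
    | zero => simpa using key.1
    | succ j =>
      simp only [List.getD_cons_succ]
      have := ih (↑ls') (↑lt') (by
        have : Multiset.card s = Multiset.card (a ::ₘ (↑ls' : Multiset ℝ)) := by rw [hscoe]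
        simpa [hcard] using this.symm) key.2 j
      rwa [hsort_s', hsort_t'] at this

/-- Let `g : S → Q` be a bijection between finite subsets of
`ℝⁿ` moving every point by at most `ε`, and `h ≥ 1` with `|S| ≥ h+1`. Then
`|A(p,T) − A(g(p),g(T))| ≤ 2ε` for every `p ∈ S` and every `h`-element subset
`T` of `S∖{p}`; consequently for `1 ≤ i ≤ C(|S|−1,h)` the `i`-th smallest
h-order averages at `p` (in `S`) and at `g(p)` (in `Q`) differ by at most
`2ε`. -/
theorem stmt_11 (n h : ℕ) (hn : 1 ≤ n) (hh : 1 ≤ h) (ε : ℝ) (hε : 0 ≤ ε)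
    (S Q : Finset (EuclideanSpace ℝ (Fin n))) (hcard : h + 1 ≤ S.card)
    (g : EuclideanSpace ℝ (Fin n) → EuclideanSpace ℝ (Fin n))
    (hg : Set.BijOn g ↑S ↑Q) (hclose : ∀ p ∈ S, dist p (g p) ≤ ε) :
    (∀ p ∈ S, ∀ T : Finset (EuclideanSpace ℝ (Fin n)),
      T ⊆ S.erase p → T.card = h →
      |horderAvg h p T - horderAvg h (g p) (T.image g)| ≤ 2 * ε) ∧
    (∀ p ∈ S, ∀ i : ℕ, 1 ≤ i → i ≤ (S.card - 1).choose h →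
      |ithAvg h S p i - ithAvg h Q (g p) i| ≤ 2 * ε) := by
  have hginjS := hg.injOn
  have hh1 : (1:ℝ) ≤ (h:ℝ) := by exact_mod_cast hh
  -- per-pair bound
  have hper : ∀ x ∈ S, ∀ y ∈ S, |dist x y - dist (g x) (g y)| ≤ 2 * ε := by
    intro x hx y hy
    have := dist4_aux x y (g x) (g y)
    have h1 := hclose x hx
    have h2 := hclose y hy
    linarith
  -- Part 1
  have key1 : ∀ p ∈ S, ∀ T : Finset (EuclideanSpace ℝ (Fin n)),
      T ⊆ S.erase p → T.card = h →
      |horderAvg h p T - horderAvg h (g p) (T.image g)| ≤ 2 * ε := by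
    intro p hp T hT hTcard
    have hTS : ∀ x ∈ T, x ∈ S := fun x hx => Finset.mem_of_mem_erase (hT hx)
    have hinj : ∀ x ∈ T, ∀ y ∈ T, g x = g y → x = y := fun x hx y hy hxy =>
      hginjS (hTS x hx) (hTS y hy) hxy
    have himg1 : ∑ q ∈ T.image g, dist (g p) q = ∑ q ∈ T, dist (g p) (g q) :=
      Finset.sum_image hinj
    have himg2 : ∑ q ∈ T.image g, ∑ r ∈ T.image g, dist q r
        = ∑ q ∈ T, ∑ r ∈ T, dist (g q) (g r) := by
      rw [Finset.sum_image hinj]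
      exact Finset.sum_congr rfl fun q _hq => Finset.sum_image hinj
    set S1 : ℝ := ∑ q ∈ T, dist p q with hS1
    set S1' : ℝ := ∑ q ∈ T, dist (g p) (g q) with hS1'
    set S2 : ℝ := ∑ q ∈ T, ∑ r ∈ T, dist q r with hS2
    set S2' : ℝ := ∑ q ∈ T, ∑ r ∈ T, dist (g q) (g r) with hS2'
    have hb1 : |S1 - S1'| ≤ (h:ℝ) * (2 * ε) := by
      rw [hS1, hS1', ← Finset.sum_sub_distrib]
      calc |∑ q ∈ T, (dist p q - dist (g p) (g q))|
          ≤ ∑ q ∈ T, |dist p q - dist (g p) (g q)| := Finset.abs_sum_le_sum_abs _ _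
        _ ≤ ∑ _q ∈ T, 2 * ε := Finset.sum_le_sum fun q hq => hper p hp q (hTS q hq)
        _ = (h:ℝ) * (2 * ε) := by rw [Finset.sum_const, hTcard, nsmul_eq_mul]
    have hb2 : |S2 - S2'| ≤ (h:ℝ) * (((h:ℝ) - 1) * (2 * ε)) := by
      have hdiff : S2 - S2' = ∑ q ∈ T, ∑ r ∈ T, (dist q r - dist (g q) (g r)) := by
        rw [hS2, hS2', ← Finset.sum_sub_distrib]
        exact Finset.sum_congr rfl fun q _ => (Finset.sum_sub_distrib _ _).symm
      rw [hdiff]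
      calc |∑ q ∈ T, ∑ r ∈ T, (dist q r - dist (g q) (g r))|
          ≤ ∑ q ∈ T, |∑ r ∈ T, (dist q r - dist (g q) (g r))| :=
            Finset.abs_sum_le_sum_abs _ _
        _ ≤ ∑ q ∈ T, (((h:ℝ) - 1) * (2 * ε)) := by
            refine Finset.sum_le_sum fun q hq => ?_
            calc |∑ r ∈ T, (dist q r - dist (g q) (g r))|
                ≤ ∑ r ∈ T, |dist q r - dist (g q) (g r)| := Finset.abs_sum_le_sum_abs _ _
              _ ≤ ∑ r ∈ T, (if q = r then (0:ℝ) else 2 * ε) := by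
                  refine Finset.sum_le_sum fun r hr => ?_
                  by_cases hqr : q = r
                  · simp [hqr]
                  · simpa [hqr] using hper q (hTS q hq) r (hTS r hr)
              _ = ∑ r ∈ T.erase q, (if q = r then (0:ℝ) else 2 * ε) :=
                  (Finset.sum_erase _ (by simp)).symm
              _ = ∑ _r ∈ T.erase q, 2 * ε := by
                  refine Finset.sum_congr rfl fun r hr => ?_
                  have : r ≠ q := (Finset.mem_erase.mp hr).1
                  simp [Ne.symm this]
              _ = ((h:ℝ) - 1) * (2 * ε) := by
                  rw [Finset.sum_const, Finset.card_erase_of_mem hq, hTcard, nsmul_eq_mul]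
                  congr 1
                  rw [Nat.cast_sub hh, Nat.cast_one]
        _ = (h:ℝ) * (((h:ℝ) - 1) * (2 * ε)) := by
            rw [Finset.sum_const, hTcard, nsmul_eq_mul]
    have hdiff : horderAvg h p T - horderAvg h (g p) (T.image g)
        = 2 / ((h:ℝ) * ((h:ℝ) + 1)) * ((S1 - S1') + (S2 - S2') / 2) := by
      unfold horderAvg
      rw [himg1, himg2]
      ring
    have hhne : (h:ℝ) * ((h:ℝ) + 1) ≠ 0 := by positivity
    have hcpos : (0:ℝ) ≤ 2 / ((h:ℝ) * ((h:ℝ) + 1)) := by positivity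
    rw [hdiff, abs_mul, abs_of_nonneg hcpos]
    have habs : |(S1 - S1') + (S2 - S2') / 2| ≤ (h:ℝ) * (2 * ε) + (h:ℝ) * (((h:ℝ) - 1) * (2 * ε)) / 2 := by
      calc |(S1 - S1') + (S2 - S2') / 2| ≤ |S1 - S1'| + |(S2 - S2') / 2| := abs_add_le _ _
        _ = |S1 - S1'| + |S2 - S2'| / 2 := by rw [abs_div]; norm_num
        _ ≤ (h:ℝ) * (2 * ε) + (h:ℝ) * (((h:ℝ) - 1) * (2 * ε)) / 2 := by
            have := hb2; linarith
    calc 2 / ((h:ℝ) * ((h:ℝ) + 1)) * |(S1 - S1') + (S2 - S2') / 2|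
        ≤ 2 / ((h:ℝ) * ((h:ℝ) + 1)) * ((h:ℝ) * (2 * ε) + (h:ℝ) * (((h:ℝ) - 1) * (2 * ε)) / 2) :=
          mul_le_mul_of_nonneg_left habs hcpos
      _ = 2 * ε := by field_simp; ring
  refine ⟨key1, ?_⟩
  -- Part 2
  intro p hp i _hi1 _hi2
  have hpQ : g p ∈ Q := hg.mapsTo hp
  -- the powerset of Q ∖ {g p} is the image of the powerset of S ∖ {p}
  have hPS : ((Q.erase (g p)).powersetCard h).val
      = Multiset.map (Finset.image g) ((S.erase p).powersetCard h).val := by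
    refine (Multiset.Nodup.ext ((Q.erase (g p)).powersetCard h).nodup
      (Multiset.Nodup.map_on ?_ ((S.erase p).powersetCard h).nodup)).mpr ?_
    · -- injectivity of image on subsets of S.erase p
      intro T₁ h₁ T₂ h₂ heq
      have hsub : ∀ A B : Finset (EuclideanSpace ℝ (Fin n)),
          A ⊆ S.erase p → B ⊆ S.erase p → A.image g = B.image g → A ⊆ B := by
        intro A B hA hB hE x hx
        have : g x ∈ B.image g := hE ▸ Finset.mem_image_of_mem g hx
        obtain ⟨y, hy, hyx⟩ := Finset.mem_image.mp this
        have hxy : y = x := hginjS (Finset.mem_coe.mpr (Finset.mem_of_mem_erase (hB hy)))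
          (Finset.mem_coe.mpr (Finset.mem_of_mem_erase (hA hx))) hyx
        exact hxy ▸ hy
      have h₁' := Finset.mem_powersetCard.mp (Finset.mem_val.mp (by exact h₁))
      have h₂' := Finset.mem_powersetCard.mp (Finset.mem_val.mp (by exact h₂))
      exact Finset.Subset.antisymm (hsub _ _ h₁'.1 h₂'.1 heq) (hsub _ _ h₂'.1 h₁'.1 heq.symm)
    · intro U
      simp only [Finset.mem_val, Multiset.mem_map, Finset.mem_powersetCard]
      constructor
      · rintro ⟨hUsub, hUcard⟩
        refine ⟨S.filter (fun x => g x ∈ U), ?_⟩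
        have hTsub : S.filter (fun x => g x ∈ U) ⊆ S.erase p := by
          intro x hx
          rw [Finset.mem_filter] at hx
          rw [Finset.mem_erase]
          refine ⟨?_, hx.1⟩
          rintro rfl
          exact (Finset.mem_erase.mp (hUsub hx.2)).1 rfl
        have himage : (S.filter (fun x => g x ∈ U)).image g = U := by
          apply Finset.Subset.antisymm
          · intro q hq
            obtain ⟨x, hx, rfl⟩ := Finset.mem_image.mp hq
            exact (Finset.mem_filter.mp hx).2
          · intro q hq
            have hqQ : q ∈ Q := Finset.mem_of_mem_erase (hUsub hq)
            obtain ⟨x, hxS, rfl⟩ := hg.surjOn (Finset.mem_coe.mpr hqQ)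
            exact Finset.mem_image_of_mem g
              (Finset.mem_filter.mpr ⟨Finset.mem_coe.mp hxS, hq⟩)
        have hTcard : (S.filter (fun x => g x ∈ U)).card = h := by
          have hinjT : Set.InjOn g ↑(S.filter (fun x => g x ∈ U)) := by
            intro x hx y hy hxy
            exact hginjS (Finset.mem_coe.mpr (Finset.mem_filter.mp (Finset.mem_coe.mp hx)).1)
              (Finset.mem_coe.mpr (Finset.mem_filter.mp (Finset.mem_coe.mp hy)).1) hxy
          have := Finset.card_image_of_injOn hinjT
          rw [himage, hUcard] at this
          exact this.symm
        exact ⟨⟨hTsub, hTcard⟩, himage⟩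
      · rintro ⟨T, ⟨hTsub, hTcard⟩, rfl⟩
        constructor
        · intro q hq
          obtain ⟨x, hx, rfl⟩ := Finset.mem_image.mp hq
          have hxS : x ∈ S := Finset.mem_of_mem_erase (hTsub hx)
          have hxp : x ≠ p := (Finset.mem_erase.mp (hTsub hx)).1
          rw [Finset.mem_erase]
          refine ⟨?_, hg.mapsTo hxS⟩
          intro hgxp
          exact hxp (hginjS (Finset.mem_coe.mpr hxS) (Finset.mem_coe.mpr hp) hgxp)
        · rw [Finset.card_image_of_injOn, hTcard]
          intro x hx y hy hxy
          exact hginjS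
            (Finset.mem_coe.mpr (Finset.mem_of_mem_erase (hTsub (Finset.mem_coe.mp hx))))
            (Finset.mem_coe.mpr (Finset.mem_of_mem_erase (hTsub (Finset.mem_coe.mp hy)))) hxy
  unfold ithAvg
  have hmsQ : (((Q.erase (g p)).powersetCard h).val).map (horderAvg h (g p))
      = (((S.erase p).powersetCard h).val).map
          (fun T => horderAvg h (g p) (T.image g)) := by
    rw [hPS, Multiset.map_map]
    rfl
  convert sort_close_aux (2 * ε) (by linarith) _ _
    ((((S.erase p).powersetCard h).val).map (fun T => horderAvg h (g p) (T.image g))) rfl ?_ (i - 1) using 5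
  · convert hmsQ using 5
  rw [Multiset.rel_map]
  convert Multiset.rel_refl_of_refl_on (m := ((S.erase p).powersetCard h).val) ?_ using 5
  intro T hT
  have hT' := Finset.mem_powersetCard.mp (Finset.mem_val.mp (by exact hT))
  exact key1 p hp T hT'.1 hT'.2
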